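/- Let n ≥ 1 and let L : (0,∞) × ℝ^n → ℝ (variables (ρ, q)) be such that q ↦ L(ρ, q) is continuously differentiable for each ρ. For m = (ρ, q) ∈ (0,∞) × ℝ^n, let T′(ρ, q) be the (1+n)×(1+n) matrix whose first row is (ρ, qᵀ), whose entries for i, j ≥ 1 with i ≠ j are q_j (∂L/∂q_i)(ρ, q), whose first column below the corner is T′_{j0} = ρ (∂L/∂q_j)(ρ, q) for j ≥ 1, and whose diagonal entries for i ≥ 1 are L + q_i ∂L/∂q_i − m·∂L/∂m. Then T′(ρ, q) is symmetric for every (ρ, q) ∈ (0,∞) × ℝ^n if and only if ρ ∇_q L(ρ, q) = q for all (ρ, q), which holds if and only if there exists a function g : (0,∞) → ℝ such that L(ρ, q) = |q|²/(2ρ) + g(ρ) for all (ρ, q). -/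

import Mathlib

open scoped BigOperators

/-- Partial gradient `∂L/∂q` of `L(ρ, q)` with respect to `q`. -/
noncomputable def gradq {n : ℕ} (L : ℝ × (Fin n → ℝ) → ℝ) (ρ : ℝ) (q : Fin n → ℝ) :
    Fin n → ℝ :=
  fun i => fderiv ℝ (fun q' => L (ρ, q')) q (Pi.single i 1)

/-- The partial derivative `∂L/∂ρ`. -/
noncomputable def dLdρ {n : ℕ} (L : ℝ × (Fin n → ℝ) → ℝ) (ρ : ℝ) (q : Fin n → ℝ) : ℝ :=
  deriv (fun r => L (r, q)) ρ

/-- The tensor `T′` of gas dynamics: the second-form Euler–Lagrange tensor with its first row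
replaced by the conserved field `m = (ρ, q)`.  Rows and columns are indexed by
`Fin 1 ⊕ Fin n ≃ Fin (1+n)`, `Sum.inl` being the time index `0`. -/
noncomputable def Tgas {n : ℕ} (L : ℝ × (Fin n → ℝ) → ℝ) (ρ : ℝ) (q : Fin n → ℝ) :
    Matrix (Fin 1 ⊕ Fin n) (Fin 1 ⊕ Fin n) ℝ :=
  Matrix.fromBlocks
    (Matrix.of fun _ _ : Fin 1 => ρ)
    (Matrix.of fun _ j => q j)
    (Matrix.of fun i _ => ρ * gradq L ρ q i)
    (Matrix.of fun i j =>
      if i = j then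
        L (ρ, q) + q i * gradq L ρ q i
          - (ρ * dLdρ L ρ q + ∑ k, q k * gradq L ρ q k)
      else q j * gradq L ρ q i)

/-- `T′(ρ,q)` is symmetric for all `ρ > 0, q` iff `ρ ∇_q L = q`, iff
`L(ρ,q) = |q|²/(2ρ) + g(ρ)` for some function `g`. -/
theorem quadDeriv (n : ℕ) (q : Fin n → ℝ) :
    HasFDerivAt (fun q : Fin n → ℝ => ∑ i, q i ^ 2)
      (∑ i, (2 * q i) • (ContinuousLinearMap.proj i : (Fin n → ℝ) →L[ℝ] ℝ)) q := by
  apply HasFDerivAt.fun_sum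
  intro i _
  have h : HasFDerivAt (fun q : Fin n → ℝ => q i)
      (ContinuousLinearMap.proj i : (Fin n → ℝ) →L[ℝ] ℝ) q :=
    hasFDerivAt_apply i q
  have h2 := h.mul h
  simp only [← pow_two] at h2
  have e : (2 * q i) • (ContinuousLinearMap.proj i : (Fin n → ℝ) →L[ℝ] ℝ)
      = q i • ContinuousLinearMap.proj i + q i • ContinuousLinearMap.proj i := by
    rw [two_mul, add_smul]
  rw [e]; exact h2

theorem quadDeriv_single (n : ℕ) (q : Fin n → ℝ) (i : Fin n) :
    (∑ k, (2 * q k) • (ContinuousLinearMap.proj k : (Fin n → ℝ) →L[ℝ] ℝ)) (Pi.single i 1)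
      = 2 * q i := by
  rw [ContinuousLinearMap.sum_apply]
  rw [Finset.sum_eq_single i]
  · simp
  · intro k _ hk
    simp [Pi.single_apply, hk]
  · simp

-- R → Q

theorem RtoQ (n : ℕ) (L : ℝ × (Fin n → ℝ) → ℝ) (g : ℝ → ℝ) (ρ : ℝ) (hρ : 0 < ρ)
    (hall : ∀ q' : Fin n → ℝ, L (ρ, q') = (∑ i, q' i ^ 2) / (2 * ρ) + g ρ)
    (q : Fin n → ℝ) (i : Fin n) : ρ * gradq L ρ q i = q i := by
  have hfun : (fun q' : Fin n → ℝ => L (ρ, q'))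
      = fun q' => (∑ i, q' i ^ 2) / (2 * ρ) + g ρ := funext hall
  have hd : HasFDerivAt (fun q' : Fin n → ℝ => (∑ i, q' i ^ 2) / (2 * ρ) + g ρ)
      ((2 * ρ)⁻¹ • ∑ k, (2 * q k) • (ContinuousLinearMap.proj k : (Fin n → ℝ) →L[ℝ] ℝ)) q := by
    have := ((quadDeriv n q).const_smul ((2 * ρ)⁻¹)).add_const (g ρ)
    simpa [div_eq_inv_mul, smul_eq_mul] using this
  have : gradq L ρ q i = (2 * ρ)⁻¹ * (2 * q i) := by
    unfold gradq
    rw [hfun, hd.fderiv, ContinuousLinearMap.smul_apply, quadDeriv_single, smul_eq_mul]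
  rw [this]
  field_simp

-- Q → R

theorem QtoR (n : ℕ) (L : ℝ × (Fin n → ℝ) → ℝ)
    (hL : ∀ ρ : ℝ, 0 < ρ → ContDiff ℝ 1 (fun q : Fin n → ℝ => L (ρ, q)))
    (hQ : ∀ (ρ : ℝ) (q : Fin n → ℝ), 0 < ρ → ∀ i, ρ * gradq L ρ q i = q i)
    (ρ : ℝ) (q : Fin n → ℝ) (hρ : 0 < ρ) :
    L (ρ, q) = (∑ i, q i ^ 2) / (2 * ρ) + L (ρ, 0) := by
  set F : (Fin n → ℝ) → ℝ := fun q => L (ρ, q) - (∑ i, q i ^ 2) / (2 * ρ) with hF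
  have hdL : Differentiable ℝ (fun q : Fin n → ℝ => L (ρ, q)) :=
    (hL ρ hρ).differentiable one_ne_zero
  have hdiffF : Differentiable ℝ F := by
    apply hdL.sub
    intro x
    have h := (quadDeriv n x).fun_const_smul ((2 * ρ)⁻¹)
    have h2 : HasFDerivAt (fun q : Fin n → ℝ => (∑ i, q i ^ 2) / (2 * ρ))
        ((2 * ρ)⁻¹ • ∑ k, (2 * x k) • (ContinuousLinearMap.proj k : (Fin n → ℝ) →L[ℝ] ℝ)) x := by
      simpa [div_eq_inv_mul, smul_eq_mul] using h
    exact h2.differentiableAt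
  have hfz : ∀ x, fderiv ℝ F x = 0 := by
    intro x
    have hdx : HasFDerivAt (fun q : Fin n → ℝ => L (ρ, q))
        (fderiv ℝ (fun q : Fin n → ℝ => L (ρ, q)) x) x := (hdL x).hasFDerivAt
    have hq : HasFDerivAt (fun q : Fin n → ℝ => (∑ i, q i ^ 2) / (2 * ρ))
        ((2 * ρ)⁻¹ • ∑ k, (2 * x k) • (ContinuousLinearMap.proj k : (Fin n → ℝ) →L[ℝ] ℝ)) x := by
      have := (quadDeriv n x).fun_const_smul ((2 * ρ)⁻¹)
      simpa [div_eq_inv_mul, smul_eq_mul] using this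
    have hFd := hdx.fun_sub hq
    rw [hFd.fderiv]
    ext v
    have hv : v = ∑ i, Pi.single i (v i) := (Finset.univ_sum_single v).symm
    rw [ContinuousLinearMap.zero_apply, hv, map_sum]
    apply Finset.sum_eq_zero
    intro i _
    have hsingle : Pi.single i (v i) = v i • (Pi.single i 1 : Fin n → ℝ) := by
      rw [← Pi.single_smul, smul_eq_mul, mul_one]
    rw [hsingle, map_smul]
    have hz : (fderiv ℝ (fun q : Fin n → ℝ => L (ρ, q)) x -
        (2 * ρ)⁻¹ • ∑ k, (2 * x k) • (ContinuousLinearMap.proj k : (Fin n → ℝ) →L[ℝ] ℝ))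
        (Pi.single i 1) = 0 := by
      rw [ContinuousLinearMap.sub_apply, ContinuousLinearMap.smul_apply, quadDeriv_single]
      have h1 : fderiv ℝ (fun q : Fin n → ℝ => L (ρ, q)) x (Pi.single i 1) = gradq L ρ x i := rfl
      rw [h1]
      have h2 := hQ ρ x hρ i
      have : gradq L ρ x i = x i / ρ := by
        field_simp at h2 ⊢; linarith
      rw [this]
      field_simp
      ring_nf; simp [hρ.ne']
    rw [hz, smul_zero]
  have hc := is_const_of_fderiv_eq_zero hdiffF hfz q 0
  have h0 : F 0 = L (ρ, 0) := by simp [hF]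
  have : F q = L (ρ, 0) := hc.trans h0
  simp only [hF] at this
  linarith

theorem PiffQ (n : ℕ) (L : ℝ × (Fin n → ℝ) → ℝ) :
    (∀ (ρ : ℝ) (q : Fin n → ℝ), 0 < ρ → (Tgas L ρ q).IsSymm) ↔
      (∀ (ρ : ℝ) (q : Fin n → ℝ), 0 < ρ → ∀ i, ρ * gradq L ρ q i = q i) := by
  constructor
  · intro hP ρ q hρ i
    have h := (hP ρ q hρ).apply (Sum.inl 0) (Sum.inr i)
    simpa [Tgas] using h
  · intro hQ ρ q hρ
    have hg : ∀ i, gradq L ρ q i = q i / ρ := by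
      intro i
      have := hQ ρ q hρ i
      field_simp
      linarith
    apply Matrix.IsSymm.ext
    rintro (a | i) (b | j)
    · simp [Tgas]
    · simpa [Tgas] using hQ ρ q hρ j
    · simpa [Tgas] using (hQ ρ q hρ i).symm
    · by_cases hij : i = j
      · simp [Tgas, hij]
      · have hij' : ¬ j = i := fun h => hij h.symm
        simp only [Tgas, Matrix.fromBlocks_apply₂₂, Matrix.of_apply, if_neg hij, if_neg hij']
        rw [hg i, hg j]
        ring

theorem stmt9 (n : ℕ) (hn : 1 ≤ n) (L : ℝ × (Fin n → ℝ) → ℝ)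
    (hL : ∀ ρ : ℝ, 0 < ρ → ContDiff ℝ 1 (fun q : Fin n → ℝ => L (ρ, q))) :
    ((∀ (ρ : ℝ) (q : Fin n → ℝ), 0 < ρ → (Tgas L ρ q).IsSymm) ↔
      (∀ (ρ : ℝ) (q : Fin n → ℝ), 0 < ρ → ∀ i, ρ * gradq L ρ q i = q i)) ∧
    ((∀ (ρ : ℝ) (q : Fin n → ℝ), 0 < ρ → (Tgas L ρ q).IsSymm) ↔
      (∃ g : ℝ → ℝ, ∀ (ρ : ℝ) (q : Fin n → ℝ), 0 < ρ →
        L (ρ, q) = (∑ i, q i ^ 2) / (2 * ρ) + g ρ)) := by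
  have hPQ := PiffQ n L
  refine ⟨hPQ, ?_⟩
  rw [hPQ]
  constructor
  · intro hQ
    exact ⟨fun ρ => L (ρ, 0), fun ρ q hρ => QtoR n L hL hQ ρ q hρ⟩
  · rintro ⟨g, hg⟩ ρ q hρ i
    exact RtoQ n L g ρ hρ (fun q' => hg ρ q' hρ) q i
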